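/- arXiv:1112.0479 — 3 statements merged into one kernel-verified Lean document; each statement's English description precedes it below -/
import Mathlib

section
/- For every real number t > 0, the integral over a from 0 to infinity of (1 + (a^2 + a^{-2}) t^2)^{-N} with respect to the measure da/a is at most (2/N) · I_N(t), where I_N(t) = t^{-N} if t ≥ 1 and I_N(t) = 1 - N·log(t) if 0 < t ≤ 1, and N > 0. -/
open MeasureTheory Set

/-- `I_N(t) = t^{-N}` for `t ≥ 1` and `I_N(t) = 1 - N·log t` for `0 < t ≤ 1`. -/
noncomputable def IN (N t : ℝ) : ℝ := if 1 ≤ t then t ^ (-N) else 1 - N * Real.log t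

private lemma IN_eq1 (N a t : ℝ) (ha : 0 < a) (ht : 0 < t) :
    ((a * t) ^ 2 : ℝ) ^ (-N) * a⁻¹ = t ^ (-(2*N)) * a ^ (-(2*N)-1) := by
  rw [mul_pow, Real.mul_rpow (by positivity) (by positivity),
    ← Real.rpow_natCast t 2, ← Real.rpow_natCast a 2,
    ← Real.rpow_mul ht.le, ← Real.rpow_mul ha.le, mul_right_comm,
    ← Real.rpow_neg_one a, ← Real.rpow_add ha]
  push_cast
  rw [show (2:ℝ) * -N = -(2*N) by ring, show -(2*N) + -1 = -(2*N)-1 by ring]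
  ring

private lemma IN_eq2 (N a t : ℝ) (ha : 0 < a) (ht : 0 < t) :
    ((a⁻¹ * t) ^ 2 : ℝ) ^ (-N) * a⁻¹ = t ^ (-(2*N)) * a ^ (2*N-1) := by
  rw [mul_pow, Real.mul_rpow (by positivity) (by positivity), inv_pow,
    Real.inv_rpow (by positivity),
    ← Real.rpow_natCast t 2, ← Real.rpow_natCast a 2,
    ← Real.rpow_mul ht.le, ← Real.rpow_mul ha.le,
    ← Real.rpow_neg ha.le, mul_right_comm,
    ← Real.rpow_neg_one a, ← Real.rpow_add ha]
  push_cast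
  rw [show (2:ℝ) * -N = -(2*N) by ring, show -(-(2*N)) + -1 = 2*N-1 by ring]
  ring

private lemma IN_bd1 (N a t : ℝ) (hN : 0 < N) (ha : 0 < a) (ht : 0 < t) :
    (1 + (a ^ 2 + (a⁻¹) ^ 2) * t ^ 2) ^ (-N) * a⁻¹ ≤ t ^ (-(2*N)) * a ^ (2*N-1) := by
  rw [← IN_eq2 N a t ha ht]
  have hb : (0:ℝ) < (a⁻¹ * t) ^ 2 := by positivity
  have hle : (a⁻¹ * t) ^ 2 ≤ 1 + (a ^ 2 + (a⁻¹) ^ 2) * t ^ 2 := by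
    have h1 : (a⁻¹ * t) ^ 2 = (a⁻¹) ^ 2 * t ^ 2 := mul_pow _ _ _
    have h2 : (0:ℝ) ≤ a ^ 2 * t ^ 2 := by positivity
    nlinarith
  exact mul_le_mul_of_nonneg_right
    (Real.rpow_le_rpow_of_nonpos hb hle (by linarith)) (inv_nonneg.2 ha.le)

private lemma IN_bd2 (N a t : ℝ) (hN : 0 < N) (ha : 0 < a) (ht : 0 < t) :
    (1 + (a ^ 2 + (a⁻¹) ^ 2) * t ^ 2) ^ (-N) * a⁻¹ ≤ t ^ (-(2*N)) * a ^ (-(2*N)-1) := by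
  rw [← IN_eq1 N a t ha ht]
  have hb : (0:ℝ) < (a * t) ^ 2 := by positivity
  have hle : (a * t) ^ 2 ≤ 1 + (a ^ 2 + (a⁻¹) ^ 2) * t ^ 2 := by
    have h1 : (a * t) ^ 2 = a ^ 2 * t ^ 2 := mul_pow _ _ _
    have h2 : (0:ℝ) ≤ (a⁻¹) ^ 2 * t ^ 2 := by positivity
    nlinarith
  exact mul_le_mul_of_nonneg_right
    (Real.rpow_le_rpow_of_nonpos hb hle (by linarith)) (inv_nonneg.2 ha.le)

private lemma IN_bd3 (N a t : ℝ) (hN : 0 < N) (ha : 0 < a) (ht : 0 < t) :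
    (1 + (a ^ 2 + (a⁻¹) ^ 2) * t ^ 2) ^ (-N) * a⁻¹ ≤ a⁻¹ := by
  have hle : (1:ℝ) ≤ 1 + (a ^ 2 + (a⁻¹) ^ 2) * t ^ 2 := by nlinarith [sq_nonneg a, sq_nonneg a⁻¹, sq_nonneg t]
  have := Real.rpow_le_rpow_of_nonpos one_pos hle (by linarith : -N ≤ 0)
  rw [Real.one_rpow] at this
  calc (1 + (a ^ 2 + (a⁻¹) ^ 2) * t ^ 2) ^ (-N) * a⁻¹ ≤ 1 * a⁻¹ :=
        mul_le_mul_of_nonneg_right this (inv_nonneg.2 ha.le)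
    _ = a⁻¹ := one_mul _

/-- For `N > 0` and `t > 0`,
`∫_0^∞ (1 + (a² + a⁻²) t²)^{-N} da/a ≤ (2/N) · I_N(t)`,
the measure `da/a` being the multiplicative Haar measure on `(0,∞)`. -/
theorem integral_est_IN (N : ℝ) (hN : 0 < N) (t : ℝ) (ht : 0 < t) :
    (∫ a in Ioi (0 : ℝ), (1 + (a ^ 2 + (a⁻¹) ^ 2) * t ^ 2) ^ (-N) * a⁻¹)
      ≤ (2 / N) * IN N t := by
  set f : ℝ → ℝ := fun a => (1 + (a ^ 2 + (a⁻¹) ^ 2) * t ^ 2) ^ (-N) * a⁻¹ with hf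
  have hf0 : 0 ≤ᵐ[volume.restrict (Ioi (0:ℝ))] f := by
    filter_upwards [ae_restrict_mem measurableSet_Ioi] with a ha
    exact mul_nonneg (Real.rpow_nonneg (by positivity) _) (inv_nonneg.2 (le_of_lt ha))
  have hIcL : IntegrableOn (fun a : ℝ => t ^ (-(2*N)) * a ^ (2*N-1)) (Ioc 0 t) := by
    have := (intervalIntegral.intervalIntegrable_rpow' (a := 0) (b := t) (by linarith : (-1:ℝ) < 2*N-1))
    rw [intervalIntegrable_iff_integrableOn_Ioc_of_le ht.le] at this
    exact this.const_mul _
  have hIcL1 : IntegrableOn (fun a : ℝ => t ^ (-(2*N)) * a ^ (2*N-1)) (Ioc 0 1) := by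
    have := (intervalIntegral.intervalIntegrable_rpow' (a := 0) (b := 1) (by linarith : (-1:ℝ) < 2*N-1))
    rw [intervalIntegrable_iff_integrableOn_Ioc_of_le zero_le_one] at this
    exact this.const_mul _
  have hIcR : ∀ c : ℝ, 0 < c →
      IntegrableOn (fun a : ℝ => t ^ (-(2*N)) * a ^ (-(2*N)-1)) (Ioi c) := fun c hc =>
    ((integrableOn_Ioi_rpow_of_lt (by linarith) hc).const_mul _)
  by_cases h1t : 1 ≤ t
  · -- case t ≥ 1
    set g : ℝ → ℝ := fun a =>
      if a ≤ 1 then t ^ (-(2*N)) * a ^ (2*N-1) else t ^ (-(2*N)) * a ^ (-(2*N)-1) with hg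
    have hgL : IntegrableOn g (Ioc 0 1) :=
      hIcL1.congr_fun (fun a ha => (if_pos ha.2).symm) measurableSet_Ioc
    have hgR : IntegrableOn g (Ioi 1) :=
      (hIcR 1 one_pos).congr_fun (fun a ha => (if_neg (not_le.2 ha)).symm) measurableSet_Ioi
    have hsplit : Ioc (0:ℝ) 1 ∪ Ioi 1 = Ioi 0 := Ioc_union_Ioi_eq_Ioi zero_le_one
    have hgi : IntegrableOn g (Ioi 0) := by
      rw [← hsplit]; exact hgL.union hgR
    have hfg : f ≤ᵐ[volume.restrict (Ioi (0:ℝ))] g := by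
      filter_upwards [ae_restrict_mem measurableSet_Ioi] with a ha
      by_cases hc : a ≤ 1
      · rw [hg]; simp only [if_pos hc]; exact IN_bd1 N a t hN ha ht
      · rw [hg]; simp only [if_neg hc]; exact IN_bd2 N a t hN ha ht
    have key : (∫ a in Ioi (0:ℝ), f a) ≤ ∫ a in Ioi (0:ℝ), g a :=
      integral_mono_of_nonneg hf0 hgi hfg
    have hL : (∫ a in Ioc (0:ℝ) 1, g a) = t ^ (-(2*N)) * (1 / (2*N)) := by
      rw [setIntegral_congr_fun measurableSet_Ioc (fun a ha => if_pos ha.2),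
        ← intervalIntegral.integral_of_le zero_le_one,
        intervalIntegral.integral_const_mul, integral_rpow (Or.inl (by linarith))]
      rw [show 2*N - 1 + 1 = 2*N by ring, Real.one_rpow,
        Real.zero_rpow (by positivity : 2*N ≠ 0)]
      ring
    have hR : (∫ a in Ioi (1:ℝ), g a) = t ^ (-(2*N)) * (1 / (2*N)) := by
      rw [setIntegral_congr_fun measurableSet_Ioi (fun a ha => if_neg (not_le.2 ha)),
        integral_const_mul, integral_Ioi_rpow_of_lt (by linarith) one_pos]
      rw [show -(2*N) - 1 + 1 = -(2*N) by ring, Real.one_rpow]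
      field_simp
    have hgval : (∫ a in Ioi (0:ℝ), g a) = t ^ (-(2*N)) * (1 / N) := by
      rw [← hsplit, setIntegral_union (Ioc_disjoint_Ioi le_rfl) measurableSet_Ioi hgL hgR,
        hL, hR]
      field_simp
      ring
    have hmono : t ^ (-(2*N)) ≤ t ^ (-N) :=
      Real.rpow_le_rpow_of_exponent_le h1t (by linarith)
    have hpos : (0:ℝ) ≤ t ^ (-N) := Real.rpow_nonneg ht.le _
    have hIN : IN N t = t ^ (-N) := if_pos h1t
    rw [hIN]
    calc (∫ a in Ioi (0:ℝ), f a) ≤ ∫ a in Ioi (0:ℝ), g a := key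
      _ = t ^ (-(2*N)) * (1 / N) := hgval
      _ ≤ t ^ (-N) * (1 / N) := by
          apply mul_le_mul_of_nonneg_right hmono
          positivity
      _ ≤ t ^ (-N) * (2 / N) := by gcongr; norm_num
      _ = (2 / N) * t ^ (-N) := mul_comm _ _
  · -- case t < 1
    have ht1 : t < 1 := not_le.1 h1t
    have hti : 1 < t⁻¹ := one_lt_inv₀ ht |>.2 ht1
    have htti : t < t⁻¹ := ht1.trans hti
    have htip : (0:ℝ) < t⁻¹ := inv_pos.2 ht
    set g : ℝ → ℝ := fun a =>
      if a ≤ t then t ^ (-(2*N)) * a ^ (2*N-1)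
      else if a ≤ t⁻¹ then a⁻¹ else t ^ (-(2*N)) * a ^ (-(2*N)-1) with hg
    have hgA : IntegrableOn g (Ioc 0 t) :=
      hIcL.congr_fun (fun a ha => (if_pos ha.2).symm) measurableSet_Ioc
    have hinv : IntegrableOn (fun a : ℝ => a⁻¹) (Ioc t t⁻¹) := by
      apply (ContinuousOn.integrableOn_Icc ?_).mono_set Ioc_subset_Icc_self
      apply ContinuousOn.inv₀ continuousOn_id
      exact fun x hx => ne_of_gt (lt_of_lt_of_le ht hx.1)
    have hgM : IntegrableOn g (Ioc t t⁻¹) :=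
      hinv.congr_fun (fun a ha => by
        rw [hg]; simp only [if_neg (not_le.2 ha.1), if_pos ha.2]) measurableSet_Ioc
    have hgB : IntegrableOn g (Ioi t⁻¹) :=
      (hIcR t⁻¹ htip).congr_fun (fun a ha => by
        rw [hg]
        simp only [if_neg (not_le.2 (htti.trans ha)), if_neg (not_le.2 (mem_Ioi.1 ha))]) measurableSet_Ioi
    have hs1 : Ioc t t⁻¹ ∪ Ioi t⁻¹ = Ioi t := Ioc_union_Ioi_eq_Ioi htti.le
    have hs2 : Ioc (0:ℝ) t ∪ Ioi t = Ioi 0 := Ioc_union_Ioi_eq_Ioi ht.le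
    have hgMB : IntegrableOn g (Ioi t) := by rw [← hs1]; exact hgM.union hgB
    have hgi : IntegrableOn g (Ioi 0) := by rw [← hs2]; exact hgA.union hgMB
    have hfg : f ≤ᵐ[volume.restrict (Ioi (0:ℝ))] g := by
      filter_upwards [ae_restrict_mem measurableSet_Ioi] with a ha
      rw [hg]
      by_cases hc1 : a ≤ t
      · simp only [if_pos hc1]; exact IN_bd1 N a t hN ha ht
      · by_cases hc2 : a ≤ t⁻¹
        · simp only [if_neg hc1, if_pos hc2]; exact IN_bd3 N a t hN ha ht
        · simp only [if_neg hc1, if_neg hc2]; exact IN_bd2 N a t hN ha ht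
    have key : (∫ a in Ioi (0:ℝ), f a) ≤ ∫ a in Ioi (0:ℝ), g a :=
      integral_mono_of_nonneg hf0 hgi hfg
    have hone : t ^ (-(2*N)) * t ^ (2*N) = 1 := by
      rw [← Real.rpow_add ht]; norm_num
    have hA : (∫ a in Ioc (0:ℝ) t, g a) = 1 / (2*N) := by
      rw [setIntegral_congr_fun measurableSet_Ioc (fun a ha => if_pos ha.2),
        ← intervalIntegral.integral_of_le ht.le,
        intervalIntegral.integral_const_mul, integral_rpow (Or.inl (by linarith))]
      rw [show 2*N - 1 + 1 = 2*N by ring, Real.zero_rpow (by positivity : 2*N ≠ 0),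
        sub_zero, ← mul_div_assoc, hone]
    have hM : (∫ a in Ioc t t⁻¹, g a) = -(2 * Real.log t) := by
      rw [setIntegral_congr_fun measurableSet_Ioc (fun a ha => by
          simp only [hg]; rw [if_neg (not_le.2 ha.1), if_pos ha.2]),
        ← intervalIntegral.integral_of_le htti.le,
        integral_inv (by rw [uIcc_of_le htti.le]; exact fun h => absurd h.1 (not_le.2 ht))]
      rw [div_eq_mul_inv, ← mul_inv, Real.log_inv, Real.log_mul ht.ne' ht.ne']
      ring
    have hB : (∫ a in Ioi t⁻¹, g a) = 1 / (2*N) := by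
      rw [setIntegral_congr_fun measurableSet_Ioi (fun a ha => by
          simp only [hg]; rw [if_neg (not_le.2 (htti.trans ha)), if_neg (not_le.2 (mem_Ioi.1 ha))]),
        integral_const_mul, integral_Ioi_rpow_of_lt (by linarith) htip]
      rw [show -(2*N) - 1 + 1 = -(2*N) by ring, Real.inv_rpow ht.le,
        ← Real.rpow_neg ht.le, neg_neg, neg_div_neg_eq, ← mul_div_assoc, hone]
    have hgval : (∫ a in Ioi (0:ℝ), g a) = 1/(2*N) + (-(2 * Real.log t) + 1/(2*N)) := by
      rw [← hs2, setIntegral_union (Ioc_disjoint_Ioi le_rfl) measurableSet_Ioi hgA hgMB,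
        hA, ← hs1, setIntegral_union (Ioc_disjoint_Ioi le_rfl) measurableSet_Ioi hgM hgB,
        hM, hB]
    have hIN : IN N t = 1 - N * Real.log t := if_neg h1t
    rw [hIN]
    have hexp : (2 / N) * (1 - N * Real.log t) = 2 / N - 2 * Real.log t := by
      field_simp
    have h12 : 1/(2*N) + 1/(2*N) ≤ 2/N := by
      rw [← add_div]
      rw [div_le_div_iff₀ (by positivity) hN]
      ring_nf
      nlinarith
    calc (∫ a in Ioi (0:ℝ), f a) ≤ ∫ a in Ioi (0:ℝ), g a := key
      _ = 1/(2*N) + (-(2 * Real.log t) + 1/(2*N)) := hgval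
      _ ≤ 2 / N - 2 * Real.log t := by linarith
      _ = (2 / N) * (1 - N * Real.log t) := hexp.symm
end

section
/- For all b, c > 0 and N > 0, the integral over a from 0 to infinity of (1 + a^2 b^2 + a^{-2} c^2)^{-N} with respect to da/a is at most (2/N) · I_N(√(bc)). -/
open MeasureTheory Set

lemma aux_integrableOn_of_le {f g : ℝ → ℝ} {s : Set ℝ} (hs : MeasurableSet s)
    (hg : IntegrableOn g s) (hf : AEStronglyMeasurable f (volume.restrict s))
    (h0 : ∀ x ∈ s, 0 ≤ f x) (h1 : ∀ x ∈ s, f x ≤ g x) : IntegrableOn f s := by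
  apply Integrable.mono hg hf
  filter_upwards [ae_restrict_mem hs] with x hx
  rw [Real.norm_eq_abs, Real.norm_eq_abs, abs_of_nonneg (h0 x hx)]
  exact le_trans (h1 x hx) (le_abs_self _)

lemma aux_contOn (N b c : ℝ) :
    ContinuousOn (fun a : ℝ => (1 + a ^ 2 * b ^ 2 + (a⁻¹) ^ 2 * c ^ 2) ^ (-N) * a⁻¹)
      (Ioi (0:ℝ)) := by
  have hinv : ContinuousOn (fun a : ℝ => a⁻¹) (Ioi 0) :=
    continuousOn_inv₀.mono (fun x hx => by simpa using (ne_of_gt hx))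
  apply ContinuousOn.mul _ hinv
  apply ContinuousOn.rpow_const
  · exact (continuousOn_const.add (((continuousOn_pow 2).mul continuousOn_const))).add
      (((hinv.pow 2).mul continuousOn_const))
  · intro x hx
    left
    have hx' : (0:ℝ) < x := hx
    positivity

lemma aux_rpow_sq {a : ℝ} (ha : 0 < a) (p : ℝ) : ((a ^ 2 : ℝ)) ^ p = a ^ (2 * p) := by
  rw [← Real.rpow_natCast a 2, ← Real.rpow_mul ha.le]
  norm_num

/-- For `b, c > 0` and `N > 0`,
`∫_0^∞ (1 + a² b² + a⁻² c²)^{-N} da/a ≤ (2/N) · I_N(√(bc))`. -/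
theorem integral_est_IN_two_params (N : ℝ) (hN : 0 < N) (b c : ℝ) (hb : 0 < b) (hc : 0 < c) :
    (∫ a in Ioi (0 : ℝ), (1 + a ^ 2 * b ^ 2 + (a⁻¹) ^ 2 * c ^ 2) ^ (-N) * a⁻¹)
      ≤ (2 / N) * IN N (Real.sqrt (b * c)) := by
  set f : ℝ → ℝ := fun a => (1 + a ^ 2 * b ^ 2 + (a⁻¹) ^ 2 * c ^ 2) ^ (-N) * a⁻¹ with hf_def
  -- pointwise bounds
  have hf_nonneg : ∀ a ∈ Ioi (0:ℝ), 0 ≤ f a := by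
    intro a ha
    have ha' : (0:ℝ) < a := ha
    positivity
  have hbase_pos : ∀ a : ℝ, 0 < a → (0:ℝ) < 1 + a ^ 2 * b ^ 2 + (a⁻¹) ^ 2 * c ^ 2 := by
    intro a ha; positivity
  have hf_le_mid : ∀ a ∈ Ioi (0:ℝ), f a ≤ a⁻¹ := by
    intro a ha
    have ha' : (0:ℝ) < a := ha
    have h1 : (1 + a ^ 2 * b ^ 2 + (a⁻¹) ^ 2 * c ^ 2) ^ (-N) ≤ 1 :=
      Real.rpow_le_one_of_one_le_of_nonpos (by nlinarith [sq_nonneg a, sq_nonneg a⁻¹]) (by linarith)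
    calc f a ≤ 1 * a⁻¹ := by
          apply mul_le_mul_of_nonneg_right h1 (by positivity)
      _ = a⁻¹ := one_mul _
  have hf_le_up : ∀ a ∈ Ioi (0:ℝ), f a ≤ b ^ (-(2*N)) * a ^ (-(2*N) - 1) := by
    intro a ha
    have ha' : (0:ℝ) < a := ha
    have h1 : (1 + a ^ 2 * b ^ 2 + (a⁻¹) ^ 2 * c ^ 2) ^ (-N) ≤ (a ^ 2 * b ^ 2) ^ (-N) := by
      apply Real.rpow_le_rpow_of_nonpos (by positivity) _ (by linarith)
      nlinarith [sq_nonneg a⁻¹]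
    have h2 : (a ^ 2 * b ^ 2 : ℝ) ^ (-N) = a ^ (-(2*N)) * b ^ (-(2*N)) := by
      rw [Real.mul_rpow (by positivity) (by positivity), aux_rpow_sq ha' (-N),
        aux_rpow_sq hb (-N)]
      ring_nf
    have h3 : a ^ (-(2*N)) * a⁻¹ = a ^ (-(2*N) - 1) := by
      rw [← Real.rpow_neg_one a, ← Real.rpow_add ha']
      ring_nf
    calc f a ≤ (a ^ 2 * b ^ 2) ^ (-N) * a⁻¹ :=
          mul_le_mul_of_nonneg_right h1 (by positivity)
      _ = b ^ (-(2*N)) * (a ^ (-(2*N)) * a⁻¹) := by rw [h2]; ring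
      _ = b ^ (-(2*N)) * a ^ (-(2*N) - 1) := by rw [h3]
  have hf_le_low : ∀ a ∈ Ioi (0:ℝ), f a ≤ c ^ (-(2*N)) * a ^ (2*N - 1) := by
    intro a ha
    have ha' : (0:ℝ) < a := ha
    have hai : (0:ℝ) < a⁻¹ := by positivity
    have h1 : (1 + a ^ 2 * b ^ 2 + (a⁻¹) ^ 2 * c ^ 2) ^ (-N) ≤ ((a⁻¹) ^ 2 * c ^ 2) ^ (-N) := by
      apply Real.rpow_le_rpow_of_nonpos (by positivity) _ (by linarith)
      nlinarith [sq_nonneg a]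
    have h2 : ((a⁻¹) ^ 2 * c ^ 2 : ℝ) ^ (-N) = a ^ (2*N) * c ^ (-(2*N)) := by
      rw [Real.mul_rpow (by positivity) (by positivity), aux_rpow_sq hai (-N),
        aux_rpow_sq hc (-N), Real.inv_rpow ha'.le, ← Real.rpow_neg ha'.le]
      ring_nf
    have h3 : a ^ (2*N) * a⁻¹ = a ^ (2*N - 1) := by
      rw [← Real.rpow_neg_one a, ← Real.rpow_add ha']
      ring_nf
    calc f a ≤ ((a⁻¹) ^ 2 * c ^ 2) ^ (-N) * a⁻¹ :=
          mul_le_mul_of_nonneg_right h1 (by positivity)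
      _ = c ^ (-(2*N)) * (a ^ (2*N) * a⁻¹) := by rw [h2]; ring
      _ = c ^ (-(2*N)) * a ^ (2*N - 1) := by rw [h3]
  -- integrability and integral values of the majorants
  have hexp_up : -(2*N) - 1 < -1 := by linarith
  have hexp_low : (-1:ℝ) < 2*N - 1 := by linarith
  have hIup : ∀ B : ℝ, 0 < B →
      IntegrableOn (fun a : ℝ => b ^ (-(2*N)) * a ^ (-(2*N) - 1)) (Ioi B) := by
    intro B hB
    exact (integrableOn_Ioi_rpow_of_lt hexp_up hB).const_mul _
  have hVup : ∀ B : ℝ, 0 < B →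
      (∫ a in Ioi B, b ^ (-(2*N)) * a ^ (-(2*N) - 1)) = b ^ (-(2*N)) * B ^ (-(2*N)) / (2*N) := by
    intro B hB
    rw [integral_const_mul, integral_Ioi_rpow_of_lt hexp_up hB]
    have : -(2*N) - 1 + 1 = -(2*N) := by ring
    rw [this]
    field_simp
  have hIlow : ∀ A : ℝ, 0 < A →
      IntegrableOn (fun a : ℝ => c ^ (-(2*N)) * a ^ (2*N - 1)) (Ioc 0 A) := by
    intro A hA
    have := (intervalIntegral.intervalIntegrable_rpow' hexp_low (a := 0) (b := A))
    rw [intervalIntegrable_iff_integrableOn_Ioc_of_le hA.le] at this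
    exact this.const_mul _
  have hVlow : ∀ A : ℝ, 0 < A →
      (∫ a in Ioc 0 A, c ^ (-(2*N)) * a ^ (2*N - 1)) = c ^ (-(2*N)) * A ^ (2*N) / (2*N) := by
    intro A hA
    rw [integral_const_mul, ← intervalIntegral.integral_of_le hA.le,
      integral_rpow (Or.inl hexp_low)]
    rw [Real.zero_rpow (ne_of_gt (by linarith : (0:ℝ) < 2*N - 1 + 1))]
    have : 2*N - 1 + 1 = 2*N := by ring
    rw [this]
    field_simp
    rw [sub_zero]
  have hImid : ∀ A B : ℝ, 0 < A → A ≤ B →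
      IntegrableOn (fun a : ℝ => a⁻¹) (Ioc A B) := by
    intro A B hA hAB
    have : IntervalIntegrable (fun a : ℝ => a⁻¹) volume A B := by
      apply intervalIntegral.intervalIntegrable_inv (f := fun x : ℝ => x)
      · intro x hx
        rw [uIcc_of_le hAB] at hx
        exact ne_of_gt (lt_of_lt_of_le hA hx.1)
      · exact continuousOn_id
    rw [intervalIntegrable_iff_integrableOn_Ioc_of_le hAB] at this
    exact this
  have hVmid : ∀ A B : ℝ, 0 < A → A ≤ B →
      (∫ a in Ioc A B, a⁻¹) = Real.log B - Real.log A := by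
    intro A B hA hAB
    rw [← intervalIntegral.integral_of_le hAB, integral_inv_of_pos hA (lt_of_lt_of_le hA hAB),
      Real.log_div (ne_of_gt (lt_of_lt_of_le hA hAB)) (ne_of_gt hA)]
  -- integrability of f on subsets
  have hfm : ∀ s : Set ℝ, MeasurableSet s → s ⊆ Ioi 0 →
      AEStronglyMeasurable f (volume.restrict s) := by
    intro s hs hsub
    exact ((aux_contOn N b c).mono hsub).aestronglyMeasurable hs
  have hfint : ∀ s : Set ℝ, MeasurableSet s → s ⊆ Ioi 0 → ∀ g : ℝ → ℝ, IntegrableOn g s →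
      (∀ x ∈ Ioi 0, f x ≤ g x) → IntegrableOn f s := by
    intro s hs hsub g hg hle
    exact aux_integrableOn_of_le hs hg (hfm s hs hsub) (fun x hx => hf_nonneg x (hsub hx))
      (fun x hx => hle x (hsub hx))
  have hbound : ∀ s : Set ℝ, MeasurableSet s → s ⊆ Ioi 0 → ∀ g : ℝ → ℝ, IntegrableOn g s →
      (∀ x ∈ Ioi 0, f x ≤ g x) → (∫ a in s, f a) ≤ ∫ a in s, g a := by
    intro s hs hsub g hg hle
    exact setIntegral_mono_on (hfint s hs hsub g hg hle) hg hs (fun x hx => hle x (hsub hx))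
  set t := Real.sqrt (b * c) with ht_def
  have hbc : (0:ℝ) < b * c := mul_pos hb hc
  by_cases ht : 1 ≤ t
  · -- case t ≥ 1
    have hbc1 : 1 ≤ b * c := by
      nlinarith [Real.mul_self_sqrt hbc.le, Real.sqrt_nonneg (b*c)]
    set a0 := Real.sqrt (c / b) with ha0_def
    have hcb : (0:ℝ) < c / b := by positivity
    have ha0 : 0 < a0 := Real.sqrt_pos.mpr hcb
    have hf1 : IntegrableOn f (Ioc 0 a0) :=
      hfint _ measurableSet_Ioc Ioc_subset_Ioi_self _ (hIlow a0 ha0) hf_le_low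
    have hf2 : IntegrableOn f (Ioi a0) :=
      hfint _ measurableSet_Ioi (Ioi_subset_Ioi ha0.le) _ (hIup a0 ha0) hf_le_up
    have hsplit : (∫ a in Ioi (0:ℝ), f a)
        = (∫ a in Ioc 0 a0, f a) + ∫ a in Ioi a0, f a := by
      rw [← setIntegral_union (Ioc_disjoint_Ioi le_rfl) measurableSet_Ioi hf1 hf2,
        Ioc_union_Ioi_eq_Ioi ha0.le]
    -- exponent arithmetic
    have e0 : a0 ^ (2*N) = (c/b) ^ N := by
      rw [ha0_def, Real.sqrt_eq_rpow, ← Real.rpow_mul hcb.le]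
      congr 1; ring
    have e0' : a0 ^ (-(2*N)) = (c/b) ^ (-N) := by
      rw [ha0_def, Real.sqrt_eq_rpow, ← Real.rpow_mul hcb.le]
      congr 1; ring
    have hbn := (Real.rpow_pos_of_pos hb N).ne'
    have hcn := (Real.rpow_pos_of_pos hc N).ne'
    have ebc : (b*c) ^ (-N) = (b ^ N * c ^ N)⁻¹ := by
      rw [Real.rpow_neg hbc.le, Real.mul_rpow hb.le hc.le]
    have ediv : ((c/b) : ℝ) ^ N = c ^ N / b ^ N := Real.div_rpow hc.le hb.le N
    have e1 : c ^ (-(2*N)) * a0 ^ (2*N) = (b*c) ^ (-N) := by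
      rw [e0, ediv, ebc, Real.rpow_neg hc.le, show (2:ℝ)*N = N + N by ring,
        Real.rpow_add hc]
      field_simp
    have e2 : b ^ (-(2*N)) * a0 ^ (-(2*N)) = (b*c) ^ (-N) := by
      have ha0' : a0 ^ (-(2*N)) = ((c/b) ^ N)⁻¹ := by
        rw [Real.rpow_neg (Real.sqrt_nonneg _), e0]
      rw [ha0', ediv, ebc, Real.rpow_neg hb.le, show (2:ℝ)*N = N + N by ring,
        Real.rpow_add hb]
      field_simp
    have hts : t ≤ b * c := by
      nlinarith [Real.mul_self_sqrt hbc.le]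
    have key : (b*c) ^ (-N) ≤ t ^ (-N) :=
      Real.rpow_le_rpow_of_nonpos (Real.sqrt_pos.mpr hbc) hts (by linarith)
    have htpos : (0:ℝ) ≤ t ^ (-N) := Real.rpow_nonneg (Real.sqrt_nonneg _) _
    rw [IN, if_pos ht, hsplit]
    calc (∫ a in Ioc 0 a0, f a) + ∫ a in Ioi a0, f a
        ≤ (∫ a in Ioc 0 a0, c ^ (-(2*N)) * a ^ (2*N - 1))
          + ∫ a in Ioi a0, b ^ (-(2*N)) * a ^ (-(2*N) - 1) :=
          add_le_add (hbound _ measurableSet_Ioc Ioc_subset_Ioi_self _ (hIlow a0 ha0) hf_le_low)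
            (hbound _ measurableSet_Ioi (Ioi_subset_Ioi ha0.le) _ (hIup a0 ha0) hf_le_up)
      _ = (b*c) ^ (-N) / N := by
          have hN' : N ≠ 0 := ne_of_gt hN
          rw [hVlow a0 ha0, hVup a0 ha0, ← add_div, e1, e2]
          field_simp
          ring
      _ ≤ t ^ (-N) / N := by gcongr
      _ ≤ (2 / N) * t ^ (-N) := by
          rw [div_mul_eq_mul_div]
          gcongr
          linarith
  · -- case t < 1
    have hbc1 : b * c < 1 := by
      by_contra h
      push_neg at h
      have h1 : (1:ℝ) ≤ Real.sqrt (b*c) := by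
        rw [show (1:ℝ) = Real.sqrt 1 from (Real.sqrt_one).symm]
        exact Real.sqrt_le_sqrt h
      exact ht h1
    have hbinv : (0:ℝ) < b⁻¹ := by positivity
    have hcb : c ≤ b⁻¹ := by
      rw [← one_div, le_div_iff₀ hb]
      nlinarith
    have hf1 : IntegrableOn f (Ioc 0 c) :=
      hfint _ measurableSet_Ioc Ioc_subset_Ioi_self _ (hIlow c hc) hf_le_low
    have hf2 : IntegrableOn f (Ioc c b⁻¹) :=
      hfint _ measurableSet_Ioc (fun x hx => lt_trans hc hx.1) _ (hImid c b⁻¹ hc hcb)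
        hf_le_mid
    have hf3 : IntegrableOn f (Ioi b⁻¹) :=
      hfint _ measurableSet_Ioi (fun x hx => lt_trans hbinv hx) _ (hIup b⁻¹ hbinv) hf_le_up
    have hf23 : IntegrableOn f (Ioi c) := by
      rw [← Ioc_union_Ioi_eq_Ioi hcb]
      exact hf2.union hf3
    have hA : (∫ a in Ioi c, f a) = (∫ a in Ioc c b⁻¹, f a) + ∫ a in Ioi b⁻¹, f a := by
      rw [← setIntegral_union (Ioc_disjoint_Ioi le_rfl) measurableSet_Ioi hf2 hf3,
        Ioc_union_Ioi_eq_Ioi hcb]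
    have hsplit : (∫ a in Ioi (0:ℝ), f a)
        = (∫ a in Ioc 0 c, f a) + ((∫ a in Ioc c b⁻¹, f a) + ∫ a in Ioi b⁻¹, f a) := by
      rw [← hA, ← setIntegral_union (Ioc_disjoint_Ioi le_rfl) measurableSet_Ioi hf1 hf23,
        Ioc_union_Ioi_eq_Ioi hc.le]
    have e1 : c ^ (-(2*N)) * c ^ (2*N) = 1 := by
      rw [← Real.rpow_add hc]
      norm_num
    have e2 : b ^ (-(2*N)) * (b⁻¹) ^ (-(2*N)) = 1 := by
      rw [Real.inv_rpow hb.le]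
      exact mul_inv_cancel₀ (Real.rpow_pos_of_pos hb _).ne'
    have elog : Real.log t = (Real.log b + Real.log c) / 2 := by
      rw [ht_def, Real.log_sqrt hbc.le, Real.log_mul (ne_of_gt hb) (ne_of_gt hc)]
    rw [IN, if_neg ht, hsplit]
    calc (∫ a in Ioc 0 c, f a) + ((∫ a in Ioc c b⁻¹, f a) + ∫ a in Ioi b⁻¹, f a)
        ≤ (∫ a in Ioc 0 c, c ^ (-(2*N)) * a ^ (2*N - 1))
          + ((∫ a in Ioc c b⁻¹, a⁻¹) + ∫ a in Ioi b⁻¹, b ^ (-(2*N)) * a ^ (-(2*N) - 1)) := by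
          apply add_le_add
          · exact hbound _ measurableSet_Ioc Ioc_subset_Ioi_self _ (hIlow c hc) hf_le_low
          apply add_le_add
          · exact hbound _ measurableSet_Ioc (fun x hx => lt_trans hc hx.1) _
              (hImid c b⁻¹ hc hcb) hf_le_mid
          · exact hbound _ measurableSet_Ioi (fun x hx => lt_trans hbinv hx) _
              (hIup b⁻¹ hbinv) hf_le_up
      _ = 1 / (2*N) + ((Real.log b⁻¹ - Real.log c) + 1 / (2*N)) := by
          rw [hVlow c hc, hVup b⁻¹ hbinv, hVmid c b⁻¹ hc hcb, e1, e2]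
      _ ≤ 2 / N * (1 - N * Real.log t) := by
          rw [Real.log_inv, elog]
          have h1 : 2 / N * (1 - N * ((Real.log b + Real.log c) / 2))
              = 2 / N - (Real.log b + Real.log c) := by
            field_simp
          rw [h1]
          have h2 : 1 / (2*N) + 1 / (2*N) = 1 / N := by
            field_simp
            norm_num
          have h3 : 1 / N ≤ 2 / N := by gcongr <;> norm_num
          linarith
end

section
/- Let S = GL_1(ℝ)^+ act on points z ∈ ℝ \ {0} via the orbit parametrization a ↦ a, and consider the integral ∫_0^∞ (1 + (a^2 + a^{-2}) z^2)^{-N} da/a for N ≥ 1. Then there is a constant C (depending only on N) such that this integral is at most C · I_N(|z|). -/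
open MeasureTheory Set

/-- For `N ≥ 1` there is a constant `C` (depending only on `N`) such that for every
`z ≠ 0`, `∫_0^∞ (1 + (a² + a⁻²) z²)^{-N} da/a ≤ C · I_N(|z|)`. -/
theorem orbital_integral_gl1_estimate (N : ℝ) (hN : 1 ≤ N) :
    ∃ C : ℝ, ∀ z : ℝ, z ≠ 0 →
      (∫ a in Ioi (0 : ℝ), (1 + (a ^ 2 + (a⁻¹) ^ 2) * z ^ 2) ^ (-N) * a⁻¹)
        ≤ C * IN N |z| := by
  refine ⟨2, fun z hz => ?_⟩
  have hN0 : (0:ℝ) < N := lt_of_lt_of_le one_pos hN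
  have ht : 0 < |z| := abs_pos.mpr hz
  set t : ℝ := |z| with htdef
  set s : ℝ := min t 1 with hsdef
  have hs : 0 < s := lt_min ht one_pos
  have hs1 : s ≤ 1 := min_le_right _ _
  set S : ℝ := s⁻¹ with hSdef
  have hS : 0 < S := inv_pos.mpr hs
  have hS1 : 1 ≤ S := one_le_inv_iff₀.mpr ⟨hs, hs1⟩
  have hsS : s ≤ S := le_trans hs1 hS1
  set f : ℝ → ℝ := fun a => (1 + (a ^ 2 + (a⁻¹) ^ 2) * z ^ 2) ^ (-N) * a⁻¹ with hfdef
  have hbase : ∀ a : ℝ, (0:ℝ) < 1 + (a ^ 2 + (a⁻¹) ^ 2) * z ^ 2 := fun a => by positivity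
  have hbase1 : ∀ a : ℝ, (1:ℝ) ≤ 1 + (a ^ 2 + (a⁻¹) ^ 2) * z ^ 2 := fun a => by
    nlinarith [sq_nonneg a, sq_nonneg a⁻¹, sq_nonneg z, sq_nonneg (a * z), sq_nonneg (a⁻¹ * z)]
  have hfnn : ∀ a : ℝ, 0 < a → 0 ≤ f a := fun a ha =>
    mul_nonneg (Real.rpow_nonneg (hbase a).le _) (inv_nonneg.mpr ha.le)
  -- generic comparison
  have key : ∀ a w : ℝ, 0 < a → 0 < w → w ≤ 1 + (a ^ 2 + (a⁻¹) ^ 2) * z ^ 2 →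
      f a ≤ w ^ (-N) * a⁻¹ := fun a w ha hw hle =>
    mul_le_mul_of_nonneg_right
      (Real.rpow_le_rpow_of_nonpos hw hle (neg_nonpos.mpr hN0.le)) (inv_nonneg.mpr ha.le)
  -- algebra: ((t*x)^2)^(-N) = t^(-(2N)) * x^(-(2N)) for x > 0
  have alg : ∀ x : ℝ, 0 < x → ((t * x) ^ 2 : ℝ) ^ (-N) = t ^ (-(2*N)) * x ^ (-(2*N)) := by
    intro x hx
    rw [← Real.rpow_natCast (t * x) 2, ← Real.rpow_mul (by positivity),
      show ((2:ℕ):ℝ) * (-N) = -(2*N) by push_cast; ring,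
      Real.mul_rpow ht.le hx.le]
  have hinvpow : ∀ x : ℝ, 0 < x → (x⁻¹ : ℝ) ^ (-(2*N)) = x ^ (2*N) := by
    intro x hx
    rw [Real.inv_rpow hx.le, Real.rpow_neg hx.le, inv_inv]
  -- the three pointwise bounds
  have bound1 : ∀ a : ℝ, 0 < a → f a ≤ t ^ (-(2*N)) * a ^ (2*N - 1) := by
    intro a ha
    have h1 : ((a⁻¹) ^ 2 * z ^ 2 : ℝ) = (t * a⁻¹) ^ 2 := by
      rw [mul_pow, htdef, sq_abs]; ring
    have h2 : f a ≤ ((a⁻¹) ^ 2 * z ^ 2) ^ (-N) * a⁻¹ := by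
      refine key a _ ha (by positivity) (by nlinarith [sq_nonneg (a * z), sq_nonneg a⁻¹, sq_nonneg z, sq_nonneg a])
    refine h2.trans_eq ?_
    rw [h1, alg _ (inv_pos.mpr ha), hinvpow a ha, mul_assoc,
      ← Real.rpow_neg_one a, ← Real.rpow_add ha, sub_eq_add_neg]
  have bound2 : ∀ a : ℝ, 0 < a → f a ≤ a⁻¹ := by
    intro a ha
    have := Real.rpow_le_one_of_one_le_of_nonpos (hbase1 a) (neg_nonpos.mpr hN0.le)
    calc f a ≤ 1 * a⁻¹ :=
          mul_le_mul_of_nonneg_right this (inv_nonneg.mpr ha.le)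
      _ = a⁻¹ := one_mul _
  have bound3 : ∀ a : ℝ, 0 < a → f a ≤ t ^ (-(2*N)) * a ^ (-(2*N) - 1) := by
    intro a ha
    have h1 : (a ^ 2 * z ^ 2 : ℝ) = (t * a) ^ 2 := by
      rw [mul_pow, htdef, sq_abs]; ring
    have h2 : f a ≤ (a ^ 2 * z ^ 2) ^ (-N) * a⁻¹ := by
      refine key a _ ha (by positivity) (by nlinarith [sq_nonneg (a⁻¹ * z), sq_nonneg a, sq_nonneg z, sq_nonneg a⁻¹])
    refine h2.trans_eq ?_
    rw [h1, alg _ ha, mul_assoc, ← Real.rpow_neg_one a, ← Real.rpow_add ha,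
      sub_eq_add_neg]
  -- measurability
  have hm : Measurable f := by
    rw [hfdef]; fun_prop
  -- integrability of the majorants
  have hg1 : IntegrableOn (fun a : ℝ => t ^ (-(2*N)) * a ^ (2*N - 1)) (Ioc 0 s) := by
    have := (intervalIntegral.intervalIntegrable_rpow' (a := 0) (b := s)
      (r := 2*N - 1) (by linarith)).const_mul (t ^ (-(2*N)))
    rw [intervalIntegrable_iff, uIoc_of_le hs.le] at this
    exact this
  have hg2 : IntegrableOn (fun a : ℝ => a⁻¹) (Ioc s S) := by
    have := intervalIntegral.intervalIntegrable_inv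
      (f := fun x : ℝ => x) (a := s) (b := S) (μ := volume)
      (fun x hx => by
        rw [uIcc_of_le hsS] at hx
        exact ne_of_gt (lt_of_lt_of_le hs hx.1))
      continuousOn_id
    rw [intervalIntegrable_iff, uIoc_of_le hsS] at this
    exact this
  have hg3 : IntegrableOn (fun a : ℝ => t ^ (-(2*N)) * a ^ (-(2*N) - 1)) (Ioi S) := by
    exact (integrableOn_Ioi_rpow_of_lt (by linarith) hS).const_mul _
  -- integrability of f on the pieces
  have hf1 : IntegrableOn f (Ioc 0 s) := by
    refine Integrable.mono' hg1 hm.aestronglyMeasurable ?_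
    filter_upwards [ae_restrict_mem measurableSet_Ioc] with a ha
    rw [Real.norm_eq_abs, abs_of_nonneg (hfnn a ha.1)]
    exact bound1 a ha.1
  have hf2 : IntegrableOn f (Ioc s S) := by
    refine Integrable.mono' hg2 hm.aestronglyMeasurable ?_
    filter_upwards [ae_restrict_mem measurableSet_Ioc] with a ha
    have ha0 : 0 < a := lt_trans hs ha.1
    rw [Real.norm_eq_abs, abs_of_nonneg (hfnn a ha0)]
    exact bound2 a ha0
  have hf3 : IntegrableOn f (Ioi S) := by
    refine Integrable.mono' hg3 hm.aestronglyMeasurable ?_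
    filter_upwards [ae_restrict_mem measurableSet_Ioi] with a ha
    have ha0 : 0 < a := lt_trans hS ha
    rw [Real.norm_eq_abs, abs_of_nonneg (hfnn a ha0)]
    exact bound3 a ha0
  -- split the integral
  have e2 : Ioi s = Ioc s S ∪ Ioi S := (Ioc_union_Ioi_eq_Ioi hsS).symm
  have hfIs : IntegrableOn f (Ioi s) := by rw [e2]; exact hf2.union hf3
  have split : ∫ a in Ioi (0:ℝ), f a
      = (∫ a in Ioc 0 s, f a) + ((∫ a in Ioc s S, f a) + ∫ a in Ioi S, f a) := by
    rw [← Ioc_union_Ioi_eq_Ioi hs.le,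
      setIntegral_union (Ioc_disjoint_Ioi le_rfl) measurableSet_Ioi hf1 hfIs, e2,
      setIntegral_union (Ioc_disjoint_Ioi le_rfl) measurableSet_Ioi hf2 hf3]
  -- bound each piece
  have le1 : (∫ a in Ioc 0 s, f a) ≤ ∫ a in Ioc 0 s, t ^ (-(2*N)) * a ^ (2*N - 1) :=
    setIntegral_mono_on hf1 hg1 measurableSet_Ioc (fun a ha => bound1 a ha.1)
  have le2 : (∫ a in Ioc s S, f a) ≤ ∫ a in Ioc s S, a⁻¹ :=
    setIntegral_mono_on hf2 hg2 measurableSet_Ioc (fun a ha => bound2 a (lt_trans hs ha.1))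
  have le3 : (∫ a in Ioi S, f a) ≤ ∫ a in Ioi S, t ^ (-(2*N)) * a ^ (-(2*N) - 1) :=
    setIntegral_mono_on hf3 hg3 measurableSet_Ioi (fun a ha => bound3 a (lt_trans hS ha))
  -- compute the majorant integrals
  have I1 : (∫ a in Ioc 0 s, t ^ (-(2*N)) * a ^ (2*N - 1))
      = t ^ (-(2*N)) * (s ^ (2*N) / (2*N)) := by
    rw [MeasureTheory.integral_const_mul]
    congr 1
    rw [← intervalIntegral.integral_of_le hs.le,
      integral_rpow (Or.inl (by linarith : (-1:ℝ) < 2*N - 1))]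
    rw [show (2*N - 1 + 1 : ℝ) = 2*N by ring,
      Real.zero_rpow (ne_of_gt (by linarith : (0:ℝ) < 2*N))]
    ring
  have I2 : (∫ a in Ioc s S, (a:ℝ)⁻¹) = -2 * Real.log s := by
    rw [← intervalIntegral.integral_of_le hsS, integral_inv_of_pos hs hS, hSdef,
      Real.log_div (inv_ne_zero hs.ne') hs.ne', Real.log_inv]
    ring
  have I3 : (∫ a in Ioi S, t ^ (-(2*N)) * a ^ (-(2*N) - 1))
      = t ^ (-(2*N)) * (s ^ (2*N) / (2*N)) := by
    rw [MeasureTheory.integral_const_mul]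
    congr 1
    rw [integral_Ioi_rpow_of_lt (by linarith) hS]
    have h4 : (-(2*N) - 1 + 1 : ℝ) = -(2*N) := by ring
    rw [h4, hSdef, hinvpow s hs]
    field_simp
  -- conclude
  have main : ∫ a in Ioi (0:ℝ), f a
      ≤ t ^ (-(2*N)) * (s ^ (2*N) / (2*N)) + (-2 * Real.log s)
        + t ^ (-(2*N)) * (s ^ (2*N) / (2*N)) := by
    rw [split]
    have := add_le_add le2 le3
    rw [I2, I3] at this
    rw [I1] at le1
    linarith [le1, this]
  refine main.trans ?_
  rcases le_or_gt 1 t with h1 | h1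
  · have hseq : s = 1 := min_eq_right h1
    rw [hseq, IN, if_pos h1, Real.one_rpow, Real.log_one]
    have h2 : t ^ (-(2*N)) ≤ t ^ (-N) := Real.rpow_le_rpow_of_exponent_le h1 (by linarith)
    have h3 : (0:ℝ) ≤ t ^ (-(2*N)) := Real.rpow_nonneg ht.le _
    have h4 : (1:ℝ) / (2*N) ≤ 1 / 2 := by
      apply one_div_le_one_div_of_le <;> linarith
    have h5 : (0:ℝ) < 1 / (2*N) := by positivity
    linarith [mul_le_mul h2 h4 h5.le (Real.rpow_nonneg ht.le (-N)),
      Real.rpow_nonneg ht.le (-N)]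
  · have hseq : s = t := min_eq_left h1.le
    rw [IN, if_neg (not_le.mpr h1), hseq]
    have hcancel : t ^ (-(2*N)) * t ^ (2*N) = 1 := by
      rw [← Real.rpow_add ht]; norm_num
    have hrw : t ^ (-(2*N)) * (t ^ (2*N) / (2*N)) = 1 / (2*N) := by
      rw [← mul_div_assoc, hcancel]
    rw [hrw]
    have hlog : Real.log t < 0 := Real.log_neg ht h1
    have h4 : (1:ℝ) / (2*N) ≤ 1 / 2 := by
      apply one_div_le_one_div_of_le <;> linarith
    have h5 : (N - 1) * Real.log t ≤ 0 :=
      mul_nonpos_of_nonneg_of_nonpos (by linarith) hlog.le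
    nlinarith [h4, h5]
end
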